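/- Let p be a prime with p ≡ -1 (mod m), k ≥ 1, and ξ a primitive m-th root of unity with m > 1. Then Φ_{p^k}(ξ) = -ξ^{(-1)^k}, i.e., Φ_{p^k}(ξ) = -ξ if k is even and -ξ^{-1} if k is odd. -/
import Mathlib


open Polynomial

theorem cyclotomic_prime_pow_eval_primitiveRoot (m p k : ℕ) (hm : 1 < m)
    (hp : p.Prime) (hpm : (m : ℤ) ∣ (p : ℤ) + 1) (hk : 1 ≤ k)
    (ξ : ℂ) (hξ : IsPrimitiveRoot ξ m) :
    (cyclotomic (p ^ k) ℂ).eval ξ = -(ξ ^ ((-1 : ℤ) ^ k)) := by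
  have hξ0 : ξ ≠ 0 := hξ.ne_zero (by omega)
  -- zpow congruence mod m
  have hcong : ∀ a b : ℤ, (m : ℤ) ∣ a - b → ξ ^ a = ξ ^ b := by
    intro a b hab
    have h1 : ξ ^ (a - b) = 1 := (hξ.zpow_eq_one_iff_dvd _).2 hab
    calc ξ ^ a = ξ ^ (b + (a - b)) := by ring_nf
    _ = ξ ^ b * ξ ^ (a - b) := zpow_add₀ hξ0 _ _
    _ = ξ ^ b := by rw [h1, mul_one]
  obtain ⟨n, rfl⟩ : ∃ n, k = n + 1 := ⟨k - 1, by omega⟩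
  -- p ≡ -1 mod m, so p^n ≡ (-1)^n
  have hpn : ∀ j : ℕ, (m : ℤ) ∣ (p : ℤ) ^ j - (-1) ^ j := by
    intro j
    have : ((p : ℤ) - (-1)) ∣ (p : ℤ) ^ j - (-1) ^ j := sub_dvd_pow_sub_pow _ _ j
    exact dvd_trans (by simpa using hpm) this
  -- coprimality of p and m
  have hcop : Nat.Coprime (p ^ n) m := by
    apply Nat.Coprime.pow_left
    rw [Nat.Prime.coprime_iff_not_dvd hp]
    intro hdvd
    have : (p : ℤ) ∣ (p : ℤ) + 1 := dvd_trans (by exact_mod_cast hdvd) hpm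
    have : (p : ℤ) ∣ 1 := (dvd_add_right dvd_rfl).mp this
    have := Int.le_of_dvd one_pos this
    have := hp.two_le
    omega
  set η : ℂ := ξ ^ (p ^ n) with hη
  have hηprim : IsPrimitiveRoot η m := hξ.pow_of_coprime _ hcop
  have hη1 : η ≠ 1 := hηprim.ne_one hm
  have hη0 : η ≠ 0 := hηprim.ne_zero (by omega)
  have heval : (cyclotomic (p ^ (n + 1)) ℂ).eval ξ = ∑ i ∈ Finset.range p, η ^ i := by
    rw [cyclotomic_prime_pow_eq_geom_sum hp]
    simp [eval_finset_sum, hη, ← pow_mul]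
  rw [heval, geom_sum_eq hη1]
  have hηp : η ^ p = ξ ^ ((-1 : ℤ) ^ (n + 1)) := by
    have : η ^ p = ξ ^ ((p : ℤ) ^ (n + 1)) := by
      rw [hη, ← pow_mul, ← pow_succ]
      rw [← zpow_natCast, Nat.cast_pow]
    rw [this]
    exact hcong _ _ (hpn (n + 1))
  have hηinv : η = ξ ^ ((-1 : ℤ) ^ n) := by
    have : η = ξ ^ ((p : ℤ) ^ n) := by rw [hη, ← zpow_natCast, Nat.cast_pow]
    rw [this]; exact hcong _ _ (hpn n)
  rw [hηp, hηinv]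
  have hmul : ξ ^ ((-1 : ℤ) ^ (n + 1)) * ξ ^ ((-1 : ℤ) ^ n) = 1 := by
    rw [← zpow_add₀ hξ0]
    have : (-1 : ℤ) ^ (n + 1) + (-1 : ℤ) ^ n = 0 := by ring
    rw [this, zpow_zero]
  rw [div_eq_iff (sub_ne_zero.2 (by rw [← hηinv]; exact hη1))]
  linear_combination hmul
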